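/- Let p > q ≥ 1. Suppose that for j = 1,…,p, (M_j,d_j) is a proper geodesic metric space containing an almost geodesic sequence, and for j = 1,…,q, (N_j,ρ_j) is a proper geodesic metric space with basepoint b_j such that every horofunction of (N_j,ρ_j) is a Busemann point and δ(h,h') = ∞ for every pair of distinct Busemann points h ≠ h' of (N_j,ρ_j). Then there exists no isometric embedding of (∏_{j=1}^p M_j, d_∞) into (∏_{j=1}^q N_j, d_∞). -/

import Mathlib

open Filter Topology

noncomputable section

/-- `horo b y z = d(z,y) - d(b,y)`, the function `h_y` with basepoint `b`. -/
def horo {M : Type*} [MetricSpace M] (b y z : M) : ℝ := dist z y - dist b y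

/-- `HoroLim b y h` : the functions `h_{y^n}` (with basepoint `b`) converge pointwise to `h`. -/
def HoroLim {M : Type*} [MetricSpace M] (b : M) (y : ℕ → M) (h : M → ℝ) : Prop :=
  ∀ z : M, Filter.Tendsto (fun n => horo b (y n) z) Filter.atTop (nhds (h z))

/-- `h` is a horofunction of `(M,d)` with basepoint `b`. -/
def IsHorofunction {M : Type*} [MetricSpace M] (b : M) (h : M → ℝ) : Prop :=
  (∃ y : ℕ → M, HoroLim b y h) ∧ ∀ y : M, h ≠ horo b y

/-- A metric space is geodesic: any two points are joined by a geodesic path. -/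
def IsGeodesicSpace (M : Type*) [MetricSpace M] : Prop :=
  ∀ x y : M, ∃ γ : ℝ → M, γ 0 = x ∧ γ (dist x y) = y ∧
    ∀ s ∈ Set.Icc (0 : ℝ) (dist x y), ∀ t ∈ Set.Icc (0 : ℝ) (dist x y),
      dist (γ s) (γ t) = |s - t|

/-- Almost geodesic sequence. -/
def IsAlmostGeodesicSeq {M : Type*} [MetricSpace M] (y : ℕ → M) : Prop :=
  Filter.Tendsto (fun n => dist (y n) (y 0)) Filter.atTop Filter.atTop ∧
  ∀ ε > (0 : ℝ), ∃ N : ℕ, ∀ m k : ℕ, N ≤ k → k ≤ m →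
    dist (y m) (y k) + dist (y k) (y 0) - dist (y m) (y 0) < ε

/-- A Busemann point: a horofunction that is the limit of an almost geodesic sequence. -/
def IsBusemannPoint {M : Type*} [MetricSpace M] (b : M) (h : M → ℝ) : Prop :=
  IsHorofunction b h ∧ ∃ y : ℕ → M, IsAlmostGeodesicSeq y ∧ HoroLim b y h

/-- Detour cost `H(h₁,h₂)`, with values in `EReal` (so it may be `⊤ = ∞`). -/
def detourCost {M : Type*} [MetricSpace M] (b : M) (h₁ h₂ : M → ℝ) : EReal :=
  ⨅ z : {z : ℕ → M // HoroLim b z h₁},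
    Filter.liminf (fun n => ((dist b (z.1 n) + h₂ (z.1 n) : ℝ) : EReal)) Filter.atTop

/-- Detour distance `δ(h₁,h₂) = H(h₁,h₂) + H(h₂,h₁)`. -/
def detourDist {M : Type*} [MetricSpace M] (b : M) (h₁ h₂ : M → ℝ) : EReal :=
  detourCost b h₁ h₂ + detourCost b h₂ h₁

lemma horo_aux_diff_pt {M : Type*} [MetricSpace M] (b y z z' : M) :
    |(dist z y - dist b y) - (dist z' y - dist b y)| ≤ dist z z' := by
  have h := abs_dist_sub_le z z' y
  have : (dist z y - dist b y) - (dist z' y - dist b y) = dist z y - dist z' y := by ring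
  rw [this]
  exact h

lemma horo_aux_diff_base {M : Type*} [MetricSpace M] (b y y' z : M) :
    |(dist z y - dist b y) - (dist z y' - dist b y')| ≤ 2 * dist y y' := by
  have h1 : |dist z y - dist z y'| ≤ dist y y' := by
    rw [dist_comm z y, dist_comm z y']
    exact abs_dist_sub_le y y' z
  have h2 : |dist b y' - dist b y| ≤ dist y y' := by
    rw [dist_comm b y', dist_comm b y, dist_comm y y']
    exact abs_dist_sub_le y' y b
  calc |(dist z y - dist b y) - (dist z y' - dist b y')|
      = |(dist z y - dist z y') + (dist b y' - dist b y)| := by ring_nf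
    _ ≤ |dist z y - dist z y'| + |dist b y' - dist b y| := abs_add_le _ _
    _ ≤ 2 * dist y y' := by linarith

lemma arctan_tendsto_cases {x : ℕ → ℝ} {α : ℝ} (C : ℝ) (hC : ∀ m, C ≤ x m)
    (h : Tendsto (fun m => Real.arctan (x m)) atTop (𝓝 α)) :
    (α < Real.pi / 2 ∧ Tendsto x atTop (𝓝 (Real.tan α))) ∨
    (α = Real.pi / 2 ∧ Tendsto x atTop atTop) := by
  have hlb : Real.arctan C ≤ α :=
    ge_of_tendsto h (Filter.Eventually.of_forall fun m => Real.arctan_strictMono.monotone (hC m))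
  have hlb2 : -(Real.pi / 2) < α := lt_of_lt_of_le (Real.neg_pi_div_two_lt_arctan C) hlb
  have hub : α ≤ Real.pi / 2 :=
    le_of_tendsto h (Filter.Eventually.of_forall fun m => le_of_lt (Real.arctan_lt_pi_div_two _))
  rcases lt_or_eq_of_le hub with hlt | heq
  · left
    refine ⟨hlt, ?_⟩
    have hcos : Real.cos α ≠ 0 :=
      (Real.cos_pos_of_mem_Ioo ⟨hlb2, hlt⟩).ne'
    have hcont : ContinuousAt Real.tan α := Real.continuousAt_tan.2 hcos
    have h2 := hcont.tendsto.comp h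
    have h3 : (Real.tan ∘ fun m => Real.arctan (x m)) = x := by
      funext m
      simp [Function.comp, Real.tan_arctan]
    rwa [h3] at h2
  · right
    refine ⟨heq, ?_⟩
    rw [tendsto_atTop]
    intro C'
    have h1 : Real.arctan C' < Real.pi / 2 := Real.arctan_lt_pi_div_two C'
    rw [heq] at h
    have h2 : ∀ᶠ m in atTop, Real.arctan C' < Real.arctan (x m) :=
      h.eventually (eventually_gt_nhds h1)
    filter_upwards [h2] with m hm
    exact le_of_lt ((Real.arctan_strictMono.lt_iff_lt.mp hm))

lemma exists_path {M : Type*} [MetricSpace M] (hgeo : IsGeodesicSpace M)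
    {y : ℕ → M} (hy : IsAlmostGeodesicSeq y) :
    ∃ P : ℝ → M,
      (∀ u v : ℝ, 0 ≤ u → u ≤ v → dist (P u) (P v) ≤ v - u) ∧
      (∀ ε : ℝ, 0 < ε → ∃ U : ℝ, 0 ≤ U ∧
        ∀ u v : ℝ, U ≤ u → u ≤ v → v - u - ε ≤ dist (P u) (P v)) := by
  classical
  obtain ⟨hfar, hexc⟩ := hy
  have hexc' : ∀ l : ℕ, ∃ N, ∀ m k, N ≤ k → k ≤ m →
      dist (y m) (y k) + dist (y k) (y 0) - dist (y m) (y 0) < (2:ℝ)⁻¹ ^ (l+1) :=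
    fun l => hexc _ (by positivity)
  choose Ne hNe using hexc'
  have hfar' : ∀ c : ℝ, ∃ N : ℕ, ∀ m, N ≤ m → c ≤ dist (y m) (y 0) := by
    intro c
    obtain ⟨N, hN⟩ := (Filter.eventually_atTop).mp (hfar.eventually_ge_atTop c)
    exact ⟨N, hN⟩
  choose Nf hNf using hfar'
  set n : ℕ → ℕ := fun l => Nat.rec (Ne 0)
    (fun l prev => max (prev + 1) (max (Ne (l+1)) (Nf (dist (y prev) (y 0) + 1)))) l with hn
  have hnsucc : ∀ l, n (l+1) = max (n l + 1) (max (Ne (l+1)) (Nf (dist (y (n l)) (y 0) + 1))) :=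
    fun l => rfl
  have hnmono : Monotone n := by
    apply monotone_nat_of_le_succ
    intro l
    rw [hnsucc]
    omega
  have hnNe : ∀ l, Ne l ≤ n l := by
    intro l
    cases l with
    | zero => exact le_refl _
    | succ l => rw [hnsucc]; omega
  set t : ℕ → ℝ := fun l => dist (y (n l)) (y 0) with ht
  have htstep : ∀ l, t l + 1 ≤ t (l+1) := by
    intro l
    have h1 : Nf (dist (y (n l)) (y 0) + 1) ≤ n (l+1) := by rw [hnsucc]; omega
    exact hNf _ _ h1
  have hdistub : ∀ l l', l ≤ l' →
      dist (y (n l)) (y (n l')) ≤ t l' - t l + (2:ℝ)⁻¹ ^ (l+1) := by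
    intro l l' hll'
    have := hNe l (n l') (n l) (hnNe l) (hnmono hll')
    have hsymm : dist (y (n l)) (y (n l')) = dist (y (n l')) (y (n l)) := dist_comm _ _
    rw [hsymm]
    simp only [ht]
    linarith
  have hdistlb : ∀ l l', l ≤ l' → t l' - t l ≤ dist (y (n l)) (y (n l')) := by
    intro l l' _
    have h := abs_dist_sub_le (y (n l')) (y (n l)) (y 0)
    have h2 := abs_le.mp h
    rw [dist_comm (y (n l)) (y (n l'))]
    simp only [ht]
    linarith [h2.2]
  choose γ hγ0 hγe hγiso using fun l => hgeo (y (n l)) (y (n (l+1)))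
  set L : ℕ → ℝ := fun l => dist (y (n l)) (y (n (l+1))) with hLdef
  have hL1 : ∀ l, 1 ≤ L l := by
    intro l
    have := hdistlb l (l+1) (Nat.le_succ l)
    have := htstep l
    simp only [hLdef]
    linarith
  set s : ℕ → ℝ := fun l => Nat.rec (0:ℝ) (fun l acc => acc + L l) l with hs
  have hs0 : s 0 = 0 := rfl
  have hssucc : ∀ l, s (l+1) = s l + L l := fun l => rfl
  have hsge : ∀ l : ℕ, (l:ℝ) ≤ s l := by
    intro l
    induction l with
    | zero => simp [hs0]
    | succ l ih =>
      rw [hssucc]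
      push_cast
      linarith [hL1 l]
  have hsmono : Monotone s := by
    apply monotone_nat_of_le_succ
    intro l; rw [hssucc]; linarith [hL1 l]
  have hidx : ∀ u : ℝ, ∃ l : ℕ, u < s (l + 1) := by
    intro u
    refine ⟨⌈u⌉₊, ?_⟩
    calc u ≤ (⌈u⌉₊ : ℝ) := Nat.le_ceil u
    _ < (⌈u⌉₊ : ℝ) + 1 := by linarith
    _ = ((⌈u⌉₊ + 1 : ℕ) : ℝ) := by push_cast; ring
    _ ≤ s (⌈u⌉₊ + 1) := hsge _
  set idx : ℝ → ℕ := fun u => Nat.find (hidx u) with hidxdef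
  have hidx1 : ∀ u, u < s (idx u + 1) := fun u => Nat.find_spec (hidx u)
  have hidx2 : ∀ u, 0 ≤ u → s (idx u) ≤ u := by
    intro u hu
    rcases Nat.eq_zero_or_pos (idx u) with h | h
    · rw [h, hs0]; exact hu
    · have hm := Nat.find_min (hidx u) (show idx u - 1 < idx u by omega)
      push_neg at hm
      have he : idx u - 1 + 1 = idx u := by omega
      rwa [he] at hm
  set P : ℝ → M := fun u => γ (idx u) (u - s (idx u)) with hPdef
  have hLpos : ∀ l, (0:ℝ) ≤ L l := fun l => le_trans zero_le_one (hL1 l)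
  have hmem : ∀ u : ℝ, 0 ≤ u → u - s (idx u) ∈ Set.Icc (0:ℝ) (L (idx u)) := by
    intro u hu
    constructor
    · linarith [hidx2 u hu]
    · have h := hidx1 u
      rw [hssucc] at h
      linarith
  have hLmem : ∀ l, L l ∈ Set.Icc (0:ℝ) (L l) := fun l => ⟨hLpos l, le_refl _⟩
  have h0mem : ∀ l, (0:ℝ) ∈ Set.Icc (0:ℝ) (L l) := fun l => ⟨le_refl _, hLpos l⟩
  have hPy : ∀ u, 0 ≤ u → dist (P u) (y (n (idx u + 1))) = s (idx u + 1) - u := by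
    intro u hu
    have h1 := hγiso (idx u) _ (hmem u hu) _ (hLmem (idx u))
    rw [hγe (idx u)] at h1
    rw [hPdef]
    simp only []
    rw [h1, abs_of_nonpos (by linarith [(hmem u hu).2]), hssucc]
    ring
  have hPy0 : ∀ u, 0 ≤ u → dist (y (n (idx u))) (P u) = u - s (idx u) := by
    intro u hu
    have h1 := hγiso (idx u) _ (h0mem (idx u)) _ (hmem u hu)
    rw [hγ0 (idx u)] at h1
    rw [hPdef]
    simp only []
    rw [h1, abs_of_nonpos (by linarith [(hmem u hu).1]), ]
    ring
  have hB2 : ∀ u, 0 ≤ u → ∀ l', idx u + 1 ≤ l' → dist (P u) (y (n l')) ≤ s l' - u := by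
    intro u hu l' hl'
    induction l', hl' using Nat.le_induction with
    | base => exact le_of_eq (hPy u hu)
    | succ l' hll ih =>
      calc dist (P u) (y (n (l'+1))) ≤ dist (P u) (y (n l')) + dist (y (n l')) (y (n (l'+1))) :=
        dist_triangle _ _ _
      _ ≤ (s l' - u) + L l' := by
        have : dist (y (n l')) (y (n (l'+1))) = L l' := rfl
        linarith [ih]
      _ = s (l'+1) - u := by rw [hssucc]; ring
  have hidxmono : ∀ u v, u ≤ v → idx u ≤ idx v := by
    intro u v huv
    exact Nat.find_min' (hidx u) (lt_of_le_of_lt huv (hidx1 v))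
  have hP1 : ∀ u v : ℝ, 0 ≤ u → u ≤ v → dist (P u) (P v) ≤ v - u := by
    intro u v hu huv
    have hv : 0 ≤ v := le_trans hu huv
    rcases eq_or_lt_of_le (hidxmono u v huv) with heq | hlt
    · have h1 := hγiso (idx u) _ (hmem u hu) _ (by rw [heq]; exact hmem v hv)
      rw [hPdef]
      simp only []
      rw [heq] at h1 ⊢
      rw [h1, abs_of_nonpos (by linarith), ]
      linarith
    · calc dist (P u) (P v) ≤ dist (P u) (y (n (idx v))) + dist (y (n (idx v))) (P v) :=
        dist_triangle _ _ _
      _ ≤ (s (idx v) - u) + (v - s (idx v)) := by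
        have h2 := hPy0 v hv
        have h3 := hB2 u hu (idx v) hlt
        linarith
      _ = v - u := by ring
  set D : ℕ → ℝ := fun l => s l - t l with hD
  have hDstep : ∀ l, D l ≤ D (l+1) ∧ D (l+1) - D l ≤ (2:ℝ)⁻¹ ^ (l+1) := by
    intro l
    have h1 := hdistlb l (l+1) (Nat.le_succ l)
    have h2 := hdistub l (l+1) (Nat.le_succ l)
    have hLl : L l = dist (y (n l)) (y (n (l+1))) := rfl
    constructor
    · simp only [hD]
      rw [hssucc]
      linarith
    · simp only [hD]
      rw [hssucc]
      linarith
  have hDbound : ∀ l l', l ≤ l' → D l' - D l ≤ (2:ℝ)⁻¹ ^ l - (2:ℝ)⁻¹ ^ l' := by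
    intro l l' hll'
    induction l', hll' using Nat.le_induction with
    | base => simp
    | succ l' hll ih =>
      have h1 := (hDstep l').2
      have h2 : (2:ℝ)⁻¹ ^ (l'+1) + (2:ℝ)⁻¹ ^ (l'+1) = (2:ℝ)⁻¹ ^ l' := by
        rw [pow_succ]
        ring
      linarith
  have hht : ∀ u, 0 ≤ u →
      u - D (idx u + 1) ≤ dist (y 0) (P u) ∧ dist (y 0) (P u) ≤ u - D (idx u) := by
    intro u hu
    constructor
    · have h1 : dist (y 0) (y (n (idx u + 1))) ≤ dist (y 0) (P u) + dist (P u) (y (n (idx u + 1))) :=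
        dist_triangle _ _ _
      have h2 := hPy u hu
      have h3 : dist (y 0) (y (n (idx u + 1))) = t (idx u + 1) := dist_comm _ _
      simp only [hD]
      linarith
    · have h1 : dist (y 0) (P u) ≤ dist (y 0) (y (n (idx u))) + dist (y (n (idx u))) (P u) :=
        dist_triangle _ _ _
      have h2 := hPy0 u hu
      have h3 : dist (y 0) (y (n (idx u))) = t (idx u) := dist_comm _ _
      simp only [hD]
      linarith
  refine ⟨P, hP1, ?_⟩
  intro ε hε
  obtain ⟨Lb, hLb⟩ : ∃ Lb : ℕ, (2:ℝ)⁻¹ ^ Lb < ε := by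
    obtain ⟨Lb, hLb⟩ := exists_pow_lt_of_lt_one hε (by norm_num : (2:ℝ)⁻¹ < 1)
    exact ⟨Lb, hLb⟩
  refine ⟨s Lb, le_trans (by positivity) (hsge Lb), ?_⟩
  intro u v hu huv
  have hu0 : 0 ≤ u := le_trans (le_trans (by positivity) (hsge Lb)) hu
  have hv0 : 0 ≤ v := le_trans hu0 huv
  have hidxu : Lb ≤ idx u := by
    by_contra h
    push_neg at h
    have : idx u + 1 ≤ Lb := h
    have := hsmono this
    linarith [hidx1 u]
  have h1 := (hht u hu0).2
  have h2 := (hht v hv0).1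
  have h3 : dist (y 0) (P v) - dist (y 0) (P u) ≤ dist (P u) (P v) := by
    have := dist_triangle (y 0) (P u) (P v)
    linarith
  have h4 : idx u ≤ idx v + 1 := le_trans (hidxmono u v huv) (Nat.le_succ _)
  have h5 := hDbound (idx u) (idx v + 1) h4
  have h6 : (2:ℝ)⁻¹ ^ idx u ≤ (2:ℝ)⁻¹ ^ Lb :=
    pow_le_pow_of_le_one (by norm_num) (by norm_num) hidxu
  have h7 : (0:ℝ) < (2:ℝ)⁻¹ ^ (idx v + 1) := by positivity
  have h6' : (2:ℝ)⁻¹ ^ idx u - (2:ℝ)⁻¹ ^ (idx v + 1) ≤ (2:ℝ)⁻¹ ^ Lb := by linarith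
  have h8 : D (idx v + 1) - D (idx u) ≤ ε := le_trans h5 (le_trans h6' (le_of_lt hLb))
  linarith

set_option maxHeartbeats 2000000 in
/-- metric version of Poincaré's theorem for products. -/
theorem stmt_0 (p q : ℕ) (hq : 1 ≤ q) (hpq : q < p)
    (M : Fin p → Type*) [∀ j, MetricSpace (M j)] [∀ j, ProperSpace (M j)]
    (hMgeo : ∀ j, IsGeodesicSpace (M j))
    (hMag : ∀ j, ∃ y : ℕ → M j, IsAlmostGeodesicSeq y)
    (N : Fin q → Type*) [∀ j, MetricSpace (N j)] [∀ j, ProperSpace (N j)]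
    (hNgeo : ∀ j, IsGeodesicSpace (N j))
    (b : ∀ j, N j)
    (hbus : ∀ j, ∀ h : N j → ℝ, IsHorofunction (b j) h → IsBusemannPoint (b j) h)
    (hdet : ∀ j, ∀ h h' : N j → ℝ, IsBusemannPoint (b j) h → IsBusemannPoint (b j) h' →
      h ≠ h' → detourDist (b j) h h' = ⊤) :
    ¬ ∃ φ : (∀ j, M j) → (∀ j, N j), Isometry φ := by
  classical
  rintro ⟨φ, hφ⟩
  haveI hNE : ∀ j, Nonempty (N j) := fun j => ⟨b j⟩
  choose Y hY using hMag
  choose P hP1 hP2 using fun i => exists_path (hMgeo i) (hY i)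
  choose Uf hUf0 hUf using fun i => hP2 i (4⁻¹ : ℝ) (by norm_num)
  set rowa : Fin p → Fin p → ℝ := fun k i => if i = k then 1 else 2 with hrowa
  set cola : Fin p → Fin p → ℝ := fun l i => if i = l then 1 else 0 with hcola
  have hrowmem : ∀ k i, 1 ≤ rowa k i ∧ rowa k i ≤ 2 := by
    intro k i; by_cases h : i = k <;> simp [hrowa, h]
  have hcolmem : ∀ l i, 0 ≤ cola l i ∧ cola l i ≤ 1 := by
    intro l i; by_cases h : i = l <;> simp [hcola, h]
  set Z : Fin p → ℝ → (∀ i, M i) := fun k τ i => P i (τ - rowa k i) with hZ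
  set Z' : Fin p → ℝ → (∀ i, M i) := fun l τ i => P i (τ - cola l i) with hZ'
  -- distance estimates
  have hD1 : ∀ k (τ τ' : ℝ), 2 ≤ τ' → τ' ≤ τ → dist (Z k τ') (Z k τ) ≤ τ - τ' := by
    intro k τ τ' h2 hle
    rw [dist_pi_le_iff (by linarith)]
    intro i
    have h := hP1 i (τ' - rowa k i) (τ - rowa k i)
      (by linarith [(hrowmem k i).2]) (by linarith)
    calc dist (Z k τ' i) (Z k τ i) ≤ (τ - rowa k i) - (τ' - rowa k i) := h
    _ = τ - τ' := by ring
  have hD2 : ∀ k l (τ τ' : ℝ), k ≠ l → 1 ≤ τ' → τ' + 2 ≤ τ →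
      dist (Z' l τ') (Z k τ) ≤ τ - τ' - 1 := by
    intro k l τ τ' hkl h1 h2
    have hkey : ∀ i, cola l i ≤ rowa k i - 1 := by
      intro i
      by_cases hil : i = l
      · have hik : ¬ (i = k) := by rw [hil]; exact fun h => hkl h.symm
        simp only [hcola, hrowa, if_pos hil, if_neg hik]
        norm_num
      · by_cases hik : i = k
        · subst hik
          simp only [hcola, hrowa, if_neg hil, if_pos rfl]
          norm_num
        · simp only [hcola, hrowa, if_neg hil, if_neg hik]
          norm_num
    rw [dist_pi_le_iff (by linarith)]
    intro i
    have h := hP1 i (τ' - cola l i) (τ - rowa k i)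
      (by linarith [(hcolmem l i).2]) (by linarith [hkey i, (hcolmem l i).1, (hrowmem k i).2])
    calc dist (Z' l τ' i) (Z k τ i) ≤ (τ - rowa k i) - (τ' - cola l i) := h
    _ ≤ τ - τ' - 1 := by linarith [hkey i]
  have hD3 : ∀ k (τ τ' : ℝ), Uf k + 1 ≤ τ' → τ' ≤ τ →
      τ - τ' - 4⁻¹ ≤ dist (Z' k τ') (Z k τ) := by
    intro k τ τ' hU hle
    have hco : Z' k τ' k = P k (τ' - 1) := by simp [hZ', hcola]
    have hro : Z k τ k = P k (τ - 1) := by simp [hZ, hrowa]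
    have h := hUf k (τ' - 1) (τ - 1) (by linarith) (by linarith)
    calc τ - τ' - 4⁻¹ = (τ - 1) - (τ' - 1) - 4⁻¹ := by ring
    _ ≤ dist (P k (τ' - 1)) (P k (τ - 1)) := h
    _ = dist (Z' k τ' k) (Z k τ k) := by rw [hco, hro]
    _ ≤ dist (Z' k τ') (Z k τ) := dist_le_pi_dist _ _ _
  have hD4 : ∀ k k' (τ : ℝ), 2 ≤ τ → dist (Z k τ) (Z k' τ) ≤ 1 := by
    intro k k' τ h2
    rw [dist_pi_le_iff (by norm_num)]
    intro i
    rcases le_total (rowa k i) (rowa k' i) with hle | hle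
    · rw [dist_comm]
      have h := hP1 i (τ - rowa k' i) (τ - rowa k i)
        (by linarith [(hrowmem k' i).2]) (by linarith)
      have := (hrowmem k i).1; have := (hrowmem k' i).2
      calc dist (Z k' τ i) (Z k τ i) ≤ (τ - rowa k i) - (τ - rowa k' i) := h
      _ ≤ 1 := by linarith
    · have h := hP1 i (τ - rowa k i) (τ - rowa k' i)
        (by linarith [(hrowmem k i).2]) (by linarith)
      have := (hrowmem k' i).1; have := (hrowmem k i).2
      calc dist (Z k τ i) (Z k' τ i) ≤ (τ - rowa k' i) - (τ - rowa k i) := h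
      _ ≤ 1 := by linarith
  have hD5 : ∀ k (τ : ℝ), 2 ≤ τ → dist (fun i => P i 0) (Z k τ) ≤ τ - 1 := by
    intro k τ h2
    rw [dist_pi_le_iff (by linarith)]
    intro i
    have h := hP1 i 0 (τ - rowa k i) (le_refl 0) (by linarith [(hrowmem k i).2])
    calc dist (P i 0) (Z k τ i) ≤ (τ - rowa k i) - 0 := h
    _ ≤ τ - 1 := by linarith [(hrowmem k i).1]
  -- dense sequences and the compact product extraction
  set ds : ∀ j : Fin q, ℕ → N j := fun j => TopologicalSpace.denseSeq (N j) with hds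
  have hdense : ∀ j, DenseRange (ds j) := fun j => TopologicalSpace.denseRange_denseSeq (N j)
  set τs : ℕ → ℝ := fun m => (m : ℝ) + 2 with hτs
  set W : Fin p → ℕ → (∀ j, N j) := fun k m => φ (Z k (τs m)) with hW
  set Fm : ℕ → ((Fin p × Fin q × ℕ) ⊕ (Fin p × Fin q)) → ℝ := fun m =>
    Sum.elim (fun x => horo (b x.2.1) (W x.1 m x.2.1) (ds x.2.1 x.2.2))
      (fun x => Real.arctan (τs m - dist (b x.2) (W x.1 m x.2))) with hFm
  set Bnd : ((Fin p × Fin q × ℕ) ⊕ (Fin p × Fin q)) → ℝ :=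
    Sum.elim (fun x => dist (b x.2.1) (ds x.2.1 x.2.2)) (fun _ => Real.pi / 2) with hBnd
  have hFmem : ∀ m, Fm m ∈ Set.univ.pi (fun x => Set.Icc (-(Bnd x)) (Bnd x)) := by
    intro m x _
    cases x with
    | inl x =>
      simp only [hFm, hBnd, Sum.elim_inl, Set.mem_Icc, horo]
      have h := abs_le.mp (abs_dist_sub_le (ds x.2.1 x.2.2) (b x.2.1) (W x.1 m x.2.1))
      rw [dist_comm (ds x.2.1 x.2.2) (b x.2.1)] at h
      exact ⟨by linarith [h.1], by linarith [h.2]⟩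
    | inr x =>
      simp only [hFm, hBnd, Sum.elim_inr, Set.mem_Icc]
      exact ⟨le_of_lt (Real.neg_pi_div_two_lt_arctan _),
        le_of_lt (Real.arctan_lt_pi_div_two _)⟩
  have hcpt : IsCompact (Set.univ.pi fun x : ((Fin p × Fin q × ℕ) ⊕ (Fin p × Fin q)) =>
      Set.Icc (-(Bnd x)) (Bnd x)) := isCompact_univ_pi fun x => isCompact_Icc
  obtain ⟨A, -, ψ, hψ, hψt⟩ := hcpt.tendsto_subseq hFmem
  have hpt : ∀ x, Tendsto (fun m => Fm (ψ m) x) atTop (𝓝 (A x)) := by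
    intro x
    exact tendsto_pi_nhds.mp hψt x
  set tt : ℕ → ℝ := fun m => (ψ m : ℝ) + 2 with htt
  have httmono : ∀ m m' : ℕ, m ≤ m' → tt m ≤ tt m' := by
    intro m m' h
    simp only [htt]
    have := hψ.monotone h
    exact_mod_cast by exact_mod_cast add_le_add_left (Nat.cast_le.2 this) 2
  have htt2 : ∀ m, 2 ≤ tt m := by
    intro m
    simp only [htt]
    have h0 : (0:ℝ) ≤ (ψ m : ℝ) := Nat.cast_nonneg _
    linarith
  have httge : ∀ m : ℕ, (m : ℝ) + 2 ≤ tt m := by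
    intro m
    simp only [htt]
    have := hψ.le_apply (x := m)
    exact_mod_cast add_le_add_left (Nat.cast_le.2 this) 2
  set w : Fin p → ℕ → ∀ j, N j := fun k m => W k (ψ m) with hwdef
  set ch : Fin p → Fin q → ℕ → ℝ := fun k j m => tt m - dist (b j) (w k m j) with hch
  have hFinl : ∀ (k : Fin p) (j : Fin q) (n m : ℕ),
      Fm (ψ m) (Sum.inl (k, j, n)) = horo (b j) (w k m j) (ds j n) := fun k j n m => rfl
  have hFinr : ∀ (k : Fin p) (j : Fin q) (m : ℕ),
      Fm (ψ m) (Sum.inr (k, j)) = Real.arctan (ch k j m) := fun k j m => rfl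
  set α : Fin p → Fin q → ℝ := fun k j => A (Sum.inr (k, j)) with hα
  have hαt : ∀ k j, Tendsto (fun m => Real.arctan (ch k j m)) atTop (𝓝 (α k j)) := by
    intro k j
    have := hpt (Sum.inr (k, j))
    simpa only [hFinr] using this
  -- lower bound for ch
  have hchlb : ∀ k j m, 1 - dist (b j) (φ (fun i => P i 0) j) ≤ ch k j m := by
    intro k j m
    have h1 : dist (b j) (w k m j) ≤ dist (b j) (φ (fun i => P i 0) j) +
        dist (φ (fun i => P i 0) j) (w k m j) := dist_triangle _ _ _
    have h2 : dist (φ (fun i => P i 0) j) (w k m j) ≤ dist (φ (fun i => P i 0)) (w k m) :=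
      dist_le_pi_dist _ _ _
    have h3 : dist (φ (fun i => P i 0)) (w k m) = dist (fun i => P i 0) (Z k (tt m)) := by
      rw [hwdef]
      simp only [hW]
      exact hφ.dist_eq _ _
    have h4 := hD5 k (tt m) (htt2 m)
    simp only [hch]
    rw [h3] at h2
    linarith
  set cc : Fin p → Fin q → ℝ := fun k j => Real.tan (α k j) with hcc
  have hdich : ∀ k j, Tendsto (ch k j) atTop (𝓝 (cc k j)) ∨ Tendsto (ch k j) atTop atTop := by
    intro k j
    rcases arctan_tendsto_cases _ (fun m => hchlb k j m) (hαt k j) with ⟨_, h⟩ | ⟨_, h⟩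
    · exact Or.inl h
    · exact Or.inr h
  -- the two rows differ by at most 1
  have hchdiff : ∀ k k' j m, |ch k j m - ch k' j m| ≤ 1 := by
    intro k k' j m
    have h1 : ch k j m - ch k' j m = dist (b j) (w k' m j) - dist (b j) (w k m j) := by
      simp only [hch]; ring
    rw [h1]
    have h2 : |dist (b j) (w k' m j) - dist (b j) (w k m j)| ≤ dist (w k' m j) (w k m j) := by
      rw [dist_comm (b j) (w k' m j), dist_comm (b j) (w k m j)]
      exact abs_dist_sub_le _ _ _
    have h3 : dist (w k' m j) (w k m j) ≤ dist (w k' m) (w k m) := dist_le_pi_dist _ _ _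
    have h4 : dist (w k' m) (w k m) = dist (Z k' (tt m)) (Z k (tt m)) := by
      simp only [hwdef, hW]
      exact hφ.dist_eq _ _
    have h5 := hD4 k' k (tt m) (htt2 m)
    calc |dist (b j) (w k' m j) - dist (b j) (w k m j)| ≤ dist (w k' m j) (w k m j) := h2
    _ ≤ 1 := by rw [h4] at h3; linarith
  set J : Fin q → Prop := fun j => ∀ k, Tendsto (ch k j) atTop (𝓝 (cc k j)) with hJdef
  have hJdich : ∀ j, J j ∨ ∀ k, Tendsto (ch k j) atTop atTop := by
    intro j
    set k0 : Fin p := ⟨0, by omega⟩ with hk0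
    rcases hdich k0 j with h1 | h1
    · left
      intro k
      rcases hdich k j with h2 | h2
      · exact h2
      · exfalso
        have he1 : ∀ᶠ m in atTop, cc k0 j + 3 ≤ ch k j m :=
          h2.eventually_ge_atTop _
        have he2 : ∀ᶠ m in atTop, ch k0 j m < cc k0 j + 1 :=
          h1.eventually (eventually_lt_nhds (by linarith))
        obtain ⟨m, hm1, hm2⟩ := (he1.and he2).exists
        have := abs_le.mp (hchdiff k k0 j m)
        linarith [this.2]
    · right
      intro k
      have h2 : Tendsto (fun m => ch k0 j m - 1) atTop atTop :=
        tendsto_atTop_add_const_right atTop (-1) h1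
      apply tendsto_atTop_mono _ h2
      intro m
      have := abs_le.mp (hchdiff k0 k j m)
      linarith [this.2]
  -- the limit functions G
  have hGex : ∀ (k : Fin p) (j : Fin q) (z : N j),
      ∃ G0 : ℝ, Tendsto (fun m => horo (b j) (w k m j) z) atTop (𝓝 G0) := by
    intro k j z
    apply cauchySeq_tendsto_of_complete
    rw [Metric.cauchySeq_iff]
    intro ε hε
    obtain ⟨n, hn⟩ : ∃ n, dist z (ds j n) < ε/4 := by
      have h := Metric.denseRange_iff.mp (hdense j) z (ε/4) (by linarith)
      exact h
    have hc : CauchySeq (fun m => horo (b j) (w k m j) (ds j n)) := by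
      have := hpt (Sum.inl (k, j, n))
      simp only [hFinl] at this
      exact this.cauchySeq
    rw [Metric.cauchySeq_iff] at hc
    obtain ⟨Nn, hNn⟩ := hc (ε/2) (by linarith)
    refine ⟨Nn, fun m1 hm1 m2 hm2 => ?_⟩
    have key : ∀ m, |horo (b j) (w k m j) z - horo (b j) (w k m j) (ds j n)| ≤ ε/4 := by
      intro m
      have := horo_aux_diff_pt (b j) (w k m j) z (ds j n)
      simp only [horo]
      calc |(dist z (w k m j) - dist (b j) (w k m j)) -
          (dist (ds j n) (w k m j) - dist (b j) (w k m j))| ≤ dist z (ds j n) := this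
      _ ≤ ε/4 := le_of_lt hn
    have h12 := hNn m1 hm1 m2 hm2
    rw [Real.dist_eq] at h12 ⊢
    have k1 := key m1
    have k2 := key m2
    have e1 := abs_le.mp k1
    have e2 := abs_le.mp k2
    have e3 := abs_lt.mp h12
    rw [abs_lt]
    constructor <;> [skip; skip] <;>
    · simp only [horo] at e1 e2 e3 ⊢
      linarith [e1.1, e1.2, e2.1, e2.2, e3.1, e3.2]
  choose G hG using hGex
  have hHL : ∀ k j, HoroLim (b j) (fun m => w k m j) (G k j) := fun k j z => hG k j z
  have hwdist : ∀ k k' (m m' : ℕ), dist (w k m') (w k' m) = dist (Z k (tt m')) (Z k' (tt m)) := by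
    intro k k' m m'
    simp only [hwdef, hW]
    exact hφ.dist_eq _ _
  have hGdiff : ∀ k k' j z, |G k j z - G k' j z| ≤ 2 := by
    intro k k' j z
    have h1 : Tendsto (fun m => |horo (b j) (w k m j) z - horo (b j) (w k' m j) z|)
        atTop (𝓝 (|G k j z - G k' j z|)) := ((hG k j z).sub (hG k' j z)).abs
    apply le_of_tendsto h1
    apply Filter.Eventually.of_forall
    intro m
    have h2 := horo_aux_diff_base (b j) (w k m j) (w k' m j) z
    have h3 : dist (w k m j) (w k' m j) ≤ dist (w k m) (w k' m) := dist_le_pi_dist _ _ _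
    have h4 := hD4 k k' (tt m) (htt2 m)
    rw [hwdist k k' m m] at h3
    simp only [horo]
    calc |(dist z (w k m j) - dist (b j) (w k m j)) -
        (dist z (w k' m j) - dist (b j) (w k' m j))| ≤ 2 * dist (w k m j) (w k' m j) := h2
    _ ≤ 2 := by linarith
  have hG1 : ∀ k j, J j → ∀ m' : ℕ, G k j (w k m' j) ≤ cc k j - tt m' := by
    intro k j hJ m'
    have hten2 : Tendsto (fun m => ch k j m - tt m') atTop (𝓝 (cc k j - tt m')) :=
      (hJ k).sub_const _
    refine le_of_tendsto_of_tendsto (hG k j (w k m' j)) hten2 ?_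
    rw [Filter.EventuallyLE, eventually_atTop]
    refine ⟨m', fun m hm => ?_⟩
    have h1 : dist (w k m' j) (w k m j) ≤ dist (w k m') (w k m) := dist_le_pi_dist _ _ _
    rw [hwdist k k m m'] at h1
    have h2 := hD1 k (tt m) (tt m') (htt2 m') (httmono m' m hm)
    simp only [horo, hch]
    have h3 : dist (b j) (w k m j) = tt m - ch k j m := by simp only [hch]; ring
    rw [h3]
    simp only [hch]
    linarith
  have hGhoro : ∀ k j, J j → IsHorofunction (b j) (G k j) := by
    intro k j hJ
    refine ⟨⟨_, hHL k j⟩, ?_⟩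
    intro x heq
    obtain ⟨m', hm'⟩ := exists_nat_gt (cc k j + dist (b j) x)
    have h1 := hG1 k j hJ m'
    have h2 : -dist (b j) x ≤ horo (b j) x (w k m' j) := by
      simp only [horo]
      linarith [dist_nonneg (x := w k m' j) (y := x)]
    rw [heq] at h1
    have h3 := httge m'
    linarith
  have hGeq : ∀ k k' j, J j → G k j = G k' j := by
    intro k k' j hJ
    by_contra hne
    have htop := hdet j _ _ (hbus j _ (hGhoro k j hJ)) (hbus j _ (hGhoro k' j hJ)) hne
    have hcost : ∀ ka kb : Fin p, detourCost (b j) (G ka j) (G kb j) ≤ ((3:ℝ) : EReal) := by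
      intro ka kb
      have step1 : detourCost (b j) (G ka j) (G kb j) ≤
          Filter.liminf (fun m => ((dist (b j) (w ka m j) + G kb j (w ka m j) : ℝ) : EReal))
            atTop := by
        rw [detourCost]
        exact iInf_le
          (fun z : {z : ℕ → N j // HoroLim (b j) z (G ka j)} =>
            Filter.liminf (fun n => ((dist (b j) (z.1 n) + G kb j (z.1 n) : ℝ) : EReal)) atTop)
          ⟨fun m => w ka m j, hHL ka j⟩
      refine le_trans step1 ?_
      apply liminf_le_of_frequently_le'
      apply Filter.Eventually.frequently
      have hev : ∀ᶠ m in atTop, cc ka j - 1 ≤ ch ka j m :=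
        (hJ ka).eventually (eventually_ge_nhds (by linarith))
      filter_upwards [hev] with m hm
      have e1 : dist (b j) (w ka m j) = tt m - ch ka j m := by simp only [hch]; ring
      have e2 : G kb j (w ka m j) ≤ G ka j (w ka m j) + 2 := by
        have := abs_le.mp (hGdiff kb ka j (w ka m j))
        linarith [this.2]
      have e3 := hG1 ka j hJ m
      have : dist (b j) (w ka m j) + G kb j (w ka m j) ≤ 3 := by
        rw [e1]
        linarith
      exact_mod_cast EReal.coe_le_coe_iff.2 this
    have hle : detourCost (b j) (G k j) (G k' j) + detourCost (b j) (G k' j) (G k j) ≤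
        ((3:ℝ) : EReal) + ((3:ℝ) : EReal) := add_le_add (hcost k k') (hcost k' k)
    rw [detourDist] at htop
    rw [htop, ← EReal.coe_add] at hle
    have hfin : ((3 + 3 : ℝ) : EReal) = ⊤ := top_le_iff.mp hle
    exact EReal.coe_ne_top _ hfin
  -- the evaluation time t'
  have hpne : (Finset.univ : Finset (Fin p)).Nonempty := by
    refine ⟨⟨0, by omega⟩, Finset.mem_univ _⟩
  set t' : ℝ := 1 + max 2 (Finset.univ.sup' hpne Uf) with ht'
  have ht'2 : 2 ≤ t' := by
    have := le_max_left 2 (Finset.univ.sup' hpne Uf)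
    simp only [ht']
    linarith
  have ht'U : ∀ i, Uf i + 1 ≤ t' := by
    intro i
    have h1 : Uf i ≤ Finset.univ.sup' hpne Uf := Finset.le_sup' Uf (Finset.mem_univ i)
    have h2 := le_max_right 2 (Finset.univ.sup' hpne Uf)
    simp only [ht']
    linarith
  set ζ : Fin p → (∀ j, N j) := fun l => φ (Z' l t') with hζ
  have hζdist : ∀ l k (m : ℕ), dist (ζ l) (w k m) = dist (Z' l t') (Z k (tt m)) := by
    intro l k m
    simp only [hζ, hwdef, hW]
    exact hφ.dist_eq _ _
  clear_value ds τs W Fm Bnd tt w ch α cc J t' ζ rowa cola Z Z'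
  -- upper bound I2
  have hI2 : ∀ k l j, k ≠ l → J j → G k j (ζ l j) ≤ cc k j - t' - 1 := by
    intro k l j hkl hJ
    rw [hJdef] at hJ
    have hten2 : Tendsto (fun m => ch k j m - t' - 1) atTop (𝓝 (cc k j - t' - 1)) :=
      ((hJ k).sub_const t').sub_const 1
    refine le_of_tendsto_of_tendsto (hG k j (ζ l j)) hten2 ?_
    rw [Filter.EventuallyLE, eventually_atTop]
    obtain ⟨m0, hm0⟩ := exists_nat_ge t'
    refine ⟨m0, fun m hm => ?_⟩
    have htm : t' + 2 ≤ tt m := by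
      have := httge m
      have : (m0 : ℝ) ≤ (m : ℝ) := Nat.cast_le.2 hm
      linarith [httge m]
    have h1 : dist (ζ l j) (w k m j) ≤ dist (ζ l) (w k m) := dist_le_pi_dist _ _ _
    rw [hζdist l k m] at h1
    have h2 := hD2 k l (tt m) t' hkl (by linarith) htm
    simp only [horo]
    have h3 : dist (b j) (w k m j) = tt m - ch k j m := by simp only [hch]; ring
    rw [h3]
    linarith
  -- lower bound I1
  have hI1 : ∀ k, ∃ j, J j ∧ cc k j - t' - 4⁻¹ ≤ G k j (ζ k j) := by
    intro k
    by_contra hcon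
    push_neg at hcon
    have hev : ∀ j : Fin q, ∀ᶠ m in atTop, dist (ζ k j) (w k m j) < tt m - t' - 4⁻¹ := by
      intro j
      have heq : ∀ m, dist (ζ k j) (w k m j) - tt m = horo (b j) (w k m j) (ζ k j) - ch k j m := by
        intro m
        simp only [horo, hch]
        ring
      rcases hJdich j with hJ | hT
      · have h1 := hcon j hJ
        rw [hJdef] at hJ
        have h2 : Tendsto (fun m => dist (ζ k j) (w k m j) - tt m) atTop
            (𝓝 (G k j (ζ k j) - cc k j)) := by
          have h3 := (hG k j (ζ k j)).sub (hJ k)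
          refine h3.congr ?_
          intro m
          exact (heq m).symm
        have h3 : G k j (ζ k j) - cc k j < -t' - 4⁻¹ := by linarith
        have h4 := h2.eventually (eventually_lt_nhds h3)
        filter_upwards [h4] with m hm
        linarith only [hm]
      · have h2 : Tendsto (fun m => dist (ζ k j) (w k m j) - tt m) atTop atBot := by
          have h3 : Tendsto (fun m => horo (b j) (w k m j) (ζ k j) - ch k j m) atTop atBot := by
            apply Filter.Tendsto.add_atBot (hG k j (ζ k j))
            exact tendsto_neg_atTop_atBot.comp (hT k)
          refine h3.congr ?_
          intro m
          exact (heq m).symm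
        have h4 := h2.eventually (eventually_le_atBot (-t' - 1))
        filter_upwards [h4] with m hm
        calc dist (ζ k j) (w k m j) ≤ tt m - t' - 1 := by linarith only [hm]
        _ < tt m - t' - 4⁻¹ := by norm_num
    have hev2 : ∀ᶠ m in atTop, (∀ j, dist (ζ k j) (w k m j) < tt m - t' - 4⁻¹) ∧
        t' ≤ tt m - 2 := by
      obtain ⟨m0, hm0⟩ := exists_nat_ge t'
      have h5 : ∀ᶠ m : ℕ in atTop, t' ≤ tt m - 2 := by
        rw [eventually_atTop]
        refine ⟨m0, fun m hm => ?_⟩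
        have h6 : (m0 : ℝ) ≤ (m : ℝ) := Nat.cast_le.2 hm
        linarith [httge m]
      exact (eventually_all.2 hev).and h5
    obtain ⟨m, h1, h2⟩ := hev2.exists
    have hlt : dist (ζ k) (w k m) < tt m - t' - 4⁻¹ :=
      (dist_pi_lt_iff (by linarith only [h2])).2 h1
    have hge : tt m - t' - 4⁻¹ ≤ dist (ζ k) (w k m) := by
      rw [hζdist k k m]
      exact hD3 k (tt m) t' (ht'U k) (by linarith only [h2])
    linarith only [hlt, hge]
  -- pigeonhole and the final contradiction
  choose jj hjJ hjge using hI1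
  obtain ⟨k, k', hkk', hjeq⟩ := Fintype.exists_ne_map_eq_of_card_lt jj (by simpa using hpq)
  have e1 := hjge k
  rw [hjeq] at e1
  have e2 := hjge k'
  have hJj : J (jj k') := hjJ k'
  have e3 := hI2 k' k (jj k') (Ne.symm hkk') hJj
  have e4 := hI2 k k' (jj k') hkk' hJj
  have hg1 : G k (jj k') = G k' (jj k') := hGeq k k' (jj k') hJj
  have e1' : cc k (jj k') - t' - 4⁻¹ ≤ G k' (jj k') (ζ k (jj k')) := by
    rw [← congrFun hg1 (ζ k (jj k'))]
    exact e1
  have e2' : cc k' (jj k') - t' - 4⁻¹ ≤ G k (jj k') (ζ k' (jj k')) := by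
    rw [congrFun hg1 (ζ k' (jj k'))]
    exact e2
  linarith [e1', e2', e3, e4]
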